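/- Let G be a finite group that is an internal semidirect product G = H ⋊ 𝒢 of subgroups H and 𝒢 (with H normal). For σ ∈ 𝒢, define φ_σ : N_G(σ) → (ℤ/o(σ)ℤ)ˣ by φ_σ(ρ) = α where ρσρ⁻¹ = σ^α, and similarly φ'_σ on the normalizer N_𝒢(σ) taken inside 𝒢. Then for every σ ∈ 𝒢, the image φ_σ(N_G(σ)) equals φ'_σ(N_𝒢(σ)). -/

import Mathlib

/-- The image of the map `φ_σ` (sending `ρ` with `ρσρ⁻¹ = σ^α` to the unit `α`)
restricted to a set `S` of elements normalizing `⟨σ⟩`. -/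
def phiImage {G : Type*} [Group G] (σ : G) (S : Set G) : Set (ZMod (orderOf σ))ˣ :=
  {α | ∃ ρ ∈ S, ρ * σ * ρ⁻¹ = σ ^ ((α : ZMod (orderOf σ)).val)}

theorem stmt0 {G : Type*} [Group G] [Finite G] (H 𝒢 : Subgroup G)
    [H.Normal] (hdisj : H ⊓ 𝒢 = ⊥) (hprod : H ⊔ 𝒢 = ⊤)
    (σ : G) (hσ : σ ∈ 𝒢) :
    phiImage σ (Subgroup.normalizer (Subgroup.zpowers σ : Set G) : Set G) =
      phiImage σ {ρ : G | ρ ∈ 𝒢 ∧ ρ ∈ Subgroup.normalizer (Subgroup.zpowers σ : Set G)} := by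
  apply Set.Subset.antisymm
  · rintro α ⟨ρ, hρ, hconj⟩
    -- decompose ρ = h * g with h ∈ H, g ∈ 𝒢
    have hρtop : ρ ∈ ((H ⊔ 𝒢 : Subgroup G) : Set G) := by
      rw [hprod]; trivial
    rw [Subgroup.normal_mul] at hρtop
    obtain ⟨h, hh, g, hg, rfl⟩ := hρtop
    set k := ((α : ZMod (orderOf σ)).val) with hk
    -- show g * σ * g⁻¹ = σ ^ k
    have key : g * σ * g⁻¹ = σ ^ k := by
      have h1 : h * (g * σ * g⁻¹) * h⁻¹ = σ ^ k := by
        have := hconj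
        rw [mul_inv_rev] at this
        beta_reduce at this
        simp only [mul_assoc] at this ⊢
        exact this
      have h2 : g * σ * g⁻¹ = h⁻¹ * σ ^ k * h := by
        rw [← h1]; group
      have hx : (g * σ * g⁻¹) * (σ ^ k)⁻¹ ∈ H ⊓ 𝒢 := by
        constructor
        · rw [h2]
          have : h⁻¹ * σ ^ k * h * (σ ^ k)⁻¹ = h⁻¹ * (σ ^ k * h * (σ ^ k)⁻¹) := by group
          rw [this]
          exact H.mul_mem (H.inv_mem hh) (‹H.Normal›.conj_mem h hh (σ ^ k))
        · exact 𝒢.mul_mem (𝒢.mul_mem (𝒢.mul_mem hg hσ) (𝒢.inv_mem hg))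
            (𝒢.inv_mem (𝒢.pow_mem hσ k))
      rw [hdisj, Subgroup.mem_bot] at hx
      have := mul_eq_one_iff_eq_inv.mp hx
      rw [this, inv_inv]
    -- g normalizes ⟨σ⟩
    have hgnorm : g ∈ Subgroup.normalizer (Subgroup.zpowers σ : Set G) := by
      apply Subgroup.mem_normalizer_fintype
      rintro n ⟨m, rfl⟩
      have : g * σ ^ m * g⁻¹ = (g * σ * g⁻¹) ^ m := by
        simp [conj_zpow]
      exact ⟨k * m, by rw [this, key, ← zpow_natCast, ← zpow_mul]⟩
    exact ⟨g, ⟨hg, hgnorm⟩, key⟩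
  · rintro α ⟨ρ, ⟨_, hρ⟩, hconj⟩
    exact ⟨ρ, hρ, hconj⟩
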